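/- arXiv:1302.3492 — 2 statements merged into one kernel-verified Lean document; each statement's English description precedes it below -/
import Mathlib

section
/- Let U, X, Y be random variables on finite alphabets such that U ↔ X ↔ Y form a Markov chain in that order (i.e., U and Y are conditionally independent given X), where (X,Y) has joint pmf P_{XY} with full-support marginals. Then I(Y;U) ≤ s*(X;Y) · I(X;U), where I(·;·) denotes mutual information. -/
open scoped BigOperators

noncomputable section

/-- A probability mass function on a finite type, as a real-valued function. -/
def IsPMF {α : Type*} [Fintype α] (p : α → ℝ) : Prop :=
  (∀ a, 0 ≤ p a) ∧ ∑ a, p a = 1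

/-- Kullback–Leibler divergence `D(q ‖ p)` between pmfs on a finite type. -/
def klDiv {α : Type*} [Fintype α] (q p : α → ℝ) : ℝ :=
  ∑ a, q a * Real.logb 2 (q a / p a)

variable {𝓧 𝓨 : Type*} [Fintype 𝓧] [Fintype 𝓨]

/-- x-marginal of a joint pmf. -/
def margX (P : 𝓧 → 𝓨 → ℝ) (x : 𝓧) : ℝ := ∑ y, P x y

/-- y-marginal of a joint pmf. -/
def margY (P : 𝓧 → 𝓨 → ℝ) (y : 𝓨) : ℝ := ∑ x, P x y

/-- Output distribution of channel `P_{Y|X}` (from joint pmf `P`) driven by input `Q`. -/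
def chanOut (P : 𝓧 → 𝓨 → ℝ) (Q : 𝓧 → ℝ) (y : 𝓨) : ℝ :=
  ∑ x, Q x * (P x y / margX P x)

/-- `s*(X;Y)`, for `(X,Y)` with joint pmf `P`. -/
def sStar (P : 𝓧 → 𝓨 → ℝ) : ℝ :=
  sSup { r : ℝ | ∃ Q : 𝓧 → ℝ, IsPMF Q ∧ Q ≠ margX P ∧
    r = klDiv (chanOut P Q) (margY P) / klDiv Q (margX P) }

/-- Mutual information `I(X;Y)` of a joint pmf. -/
def mutualInfo (P : 𝓧 → 𝓨 → ℝ) : ℝ :=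
  ∑ x, ∑ y, P x y * Real.logb 2 (P x y / (margX P x * margY P y))

/-- swapped joint pmf, for `s*(Y;X)` etc. -/
def swap (P : 𝓧 → 𝓨 → ℝ) : 𝓨 → 𝓧 → ℝ := fun y x => P x y

/-- n-fold memoryless extension of a joint source. -/
def iid (P : 𝓧 → 𝓨 → ℝ) (n : ℕ) : (Fin n → 𝓧) → (Fin n → 𝓨) → ℝ :=
  fun xs ys => ∏ i, P (xs i) (ys i)


lemma klDiv_eq_div {α : Type*} [Fintype α] (q p : α → ℝ) :
    klDiv q p = (∑ a, q a * Real.log (q a / p a)) / Real.log 2 := by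
  simp only [klDiv, Real.logb, Finset.sum_div, mul_div_assoc]

lemma pointwise_gibbs (q p : ℝ) (hq : 0 ≤ q) (hp : 0 ≤ p) (habs : p = 0 → q = 0) :
    q - p ≤ q * Real.log (q / p) := by
  rcases eq_or_lt_of_le hq with h | h
  · simp [← h]; linarith
  · have hp' : 0 < p := by
      rcases eq_or_lt_of_le hp with h' | h'
      · exact absurd (habs h'.symm) h.ne'
      · exact h'
    have h2 := Real.log_le_sub_one_of_pos (div_pos hp' h)
    have h1 : Real.log (q / p) = - Real.log (p / q) := by
      rw [← Real.log_inv]; congr 1; field_simp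
    have h4 : q * (p / q) = p := by field_simp
    rw [h1]
    nlinarith [mul_le_mul_of_nonneg_left h2 h.le]

lemma pointwise_gibbs_strict (q p : ℝ) (hq : 0 ≤ q) (hp : 0 < p) (hne : q ≠ p) :
    q - p < q * Real.log (q / p) := by
  rcases eq_or_lt_of_le hq with h | h
  · simp [← h]; linarith
  · have hne1 : p / q ≠ 1 := by
      rw [Ne, div_eq_one_iff_eq h.ne']
      exact fun hc => hne hc.symm
    have h2 := Real.log_lt_sub_one_of_pos (div_pos hp h) hne1
    have h1 : Real.log (q / p) = - Real.log (p / q) := by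
      rw [← Real.log_inv]; congr 1; field_simp
    have h4 : q * (p / q) = p := by field_simp
    rw [h1]
    nlinarith [mul_lt_mul_of_pos_left h2 h]

lemma gibbs_aux {α : Type*} [Fintype α] (q p : α → ℝ) (hq : ∀ a, 0 ≤ q a)
    (hp : ∀ a, 0 ≤ p a) (habs : ∀ a, p a = 0 → q a = 0)
    (hsum : ∑ a, p a ≤ ∑ a, q a) : 0 ≤ klDiv q p := by
  rw [klDiv_eq_div]
  apply div_nonneg _ (Real.log_nonneg one_le_two)
  have h : ∑ a, (q a - p a) ≤ ∑ a, q a * Real.log (q a / p a) :=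
    Finset.sum_le_sum fun a _ => pointwise_gibbs (q a) (p a) (hq a) (hp a) (habs a)
  rw [Finset.sum_sub_distrib] at h
  linarith

lemma gibbs_strict {α : Type*} [Fintype α] (q p : α → ℝ) (hq : IsPMF q)
    (hpp : ∀ a, 0 < p a) (hps : ∑ a, p a = 1) (hne : q ≠ p) : 0 < klDiv q p := by
  rw [klDiv_eq_div]
  apply div_pos _ (Real.log_pos one_lt_two)
  obtain ⟨a0, ha0⟩ : ∃ a, q a ≠ p a := by
    by_contra hc; push_neg at hc; exact hne (funext hc)
  have h : ∑ a, (q a - p a) < ∑ a, q a * Real.log (q a / p a) :=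
    Finset.sum_lt_sum
      (fun a _ => pointwise_gibbs (q a) (p a) (hq.1 a) (hpp a).le
        (fun h0 => absurd h0 (hpp a).ne'))
      ⟨a0, Finset.mem_univ a0,
        pointwise_gibbs_strict (q a0) (p a0) (hq.1 a0) (hpp a0) ha0⟩
  rw [Finset.sum_sub_distrib, hq.2, hps] at h
  linarith

lemma klDiv_self_eq_zero {α : Type*} [Fintype α] (p : α → ℝ) (hp : ∀ a, 0 < p a) :
    klDiv p p = 0 := by
  apply Finset.sum_eq_zero; intro a _
  rw [div_self (hp a).ne', Real.logb_one, mul_zero]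

lemma sum_margX (P : 𝓧 → 𝓨 → ℝ) (hP : IsPMF fun p : 𝓧 × 𝓨 => P p.1 p.2) :
    ∑ x, margX P x = 1 := by
  rw [← hP.2, Fintype.sum_prod_type]; rfl

lemma sum_margY (P : 𝓧 → 𝓨 → ℝ) (hP : IsPMF fun p : 𝓧 × 𝓨 => P p.1 p.2) :
    ∑ y, margY P y = 1 := by
  rw [← hP.2, Fintype.sum_prod_type, Finset.sum_comm]; rfl

lemma chanOut_nonneg (P : 𝓧 → 𝓨 → ℝ) (hPn : ∀ x y, 0 ≤ P x y)
    (hX : ∀ x, 0 < margX P x) (Q : 𝓧 → ℝ) (hQ : ∀ x, 0 ≤ Q x) (y : 𝓨) :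
    0 ≤ chanOut P Q y :=
  Finset.sum_nonneg fun x _ => mul_nonneg (hQ x) (div_nonneg (hPn x y) (hX x).le)

lemma chanOut_sum (P : 𝓧 → 𝓨 → ℝ) (hX : ∀ x, 0 < margX P x)
    (Q : 𝓧 → ℝ) (hQ : ∑ x, Q x = 1) : ∑ y, chanOut P Q y = 1 := by
  rw [show ∑ y, chanOut P Q y = ∑ x, ∑ y, Q x * (P x y / margX P x) from Finset.sum_comm]
  rw [← hQ]
  apply Finset.sum_congr rfl; intro x _
  rw [← Finset.mul_sum, ← Finset.sum_div]
  rw [show (∑ y, P x y) = margX P x from rfl, div_self (hX x).ne', mul_one]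
-- AUX END

lemma kl_dpi (P : 𝓧 → 𝓨 → ℝ) (hPn : ∀ x y, 0 ≤ P x y)
    (hX : ∀ x, 0 < margX P x) (hY : ∀ y, 0 < margY P y)
    (Q : 𝓧 → ℝ) (hQ : IsPMF Q) :
    klDiv (chanOut P Q) (margY P) ≤ klDiv Q (margX P) := by
  classical
  set R : 𝓧 × 𝓨 → ℝ := fun p => Q p.1 * (P p.1 p.2 / margX P p.1) with hRdef
  set T : 𝓧 × 𝓨 → ℝ := fun p => chanOut P Q p.2 * (P p.1 p.2 / margY P p.2) with hTdef
  have hR0 : ∀ p : 𝓧 × 𝓨, 0 ≤ R p := fun p =>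
    mul_nonneg (hQ.1 p.1) (div_nonneg (hPn p.1 p.2) (hX p.1).le)
  have hT0 : ∀ p : 𝓧 × 𝓨, 0 ≤ T p := fun p =>
    mul_nonneg (chanOut_nonneg P hPn hX Q hQ.1 p.2) (div_nonneg (hPn p.1 p.2) (hY p.2).le)
  have hRrow : ∀ x, ∑ y, R (x, y) = Q x := by
    intro x
    simp only [hRdef]
    rw [← Finset.mul_sum, ← Finset.sum_div,
      show (∑ y, P x y) = margX P x from rfl, div_self (hX x).ne', mul_one]
  have hRcol : ∀ y, ∑ x, R (x, y) = chanOut P Q y := fun y => rfl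
  have hTcol : ∀ y, ∑ x, T (x, y) = chanOut P Q y := by
    intro y
    simp only [hTdef]
    rw [← Finset.mul_sum, ← Finset.sum_div,
      show (∑ x, P x y) = margY P y from rfl, div_self (hY y).ne', mul_one]
  -- absolute continuity
  have habs : ∀ p : 𝓧 × 𝓨, T p = 0 → R p = 0 := by
    rintro ⟨x, y⟩ hT
    rcases mul_eq_zero.mp hT with h | h
    · have := (Finset.sum_eq_zero_iff_of_nonneg
        (fun x' _ => mul_nonneg (hQ.1 x') (div_nonneg (hPn x' y) (hX x').le))).mp h
      exact this x (Finset.mem_univ x)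
    · have hPxy : P x y = 0 := by
        rcases div_eq_zero_iff.mp h with h' | h'
        · exact h'
        · exact absurd h' (hY y).ne'
      simp only [hRdef, hPxy, zero_div, mul_zero]
  have hsumR : ∑ p : 𝓧 × 𝓨, R p = 1 := by
    rw [Fintype.sum_prod_type]; simp only [hRrow]; exact hQ.2
  have hsumT : ∑ p : 𝓧 × 𝓨, T p = 1 := by
    rw [Fintype.sum_prod_type, Finset.sum_comm]; simp only [hTcol]
    exact chanOut_sum P hX Q hQ.2
  have hkey : 0 ≤ klDiv R T :=
    gibbs_aux R T hR0 hT0 habs (by rw [hsumR, hsumT])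
  -- pointwise decomposition
  have hpt : ∀ x y, R (x, y) * Real.logb 2 (R (x, y) / T (x, y))
      = R (x, y) * Real.logb 2 (Q x / margX P x)
        - R (x, y) * Real.logb 2 (chanOut P Q y / margY P y) := by
    intro x y
    rcases eq_or_lt_of_le (hR0 (x, y)) with h | h
    · rw [← h]; ring
    · have hQx : 0 < Q x := by
        rcases mul_pos_iff.mp h with ⟨h1, _⟩ | ⟨h1, _⟩
        · exact h1
        · exact absurd h1 (not_lt.mpr (hQ.1 x))
      have hPdiv : 0 < P x y / margX P x := by
        rcases mul_pos_iff.mp h with ⟨_, h2⟩ | ⟨h1, _⟩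
        · exact h2
        · exact absurd h1 (not_lt.mpr (hQ.1 x))
      have hPxy : 0 < P x y := by
        have := mul_pos hPdiv (hX x)
        rwa [div_mul_cancel₀ _ (hX x).ne'] at this
      have hQY : 0 < chanOut P Q y :=
        lt_of_lt_of_le h (Finset.single_le_sum
          (fun x' _ => mul_nonneg (hQ.1 x') (div_nonneg (hPn x' y) (hX x').le))
          (Finset.mem_univ x))
      have hrt : R (x, y) / T (x, y)
          = (Q x / margX P x) / (chanOut P Q y / margY P y) := by
        have e1 : Q x * (P x y / margX P x) = (Q x / margX P x) * P x y := by ring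
        have e2 : chanOut P Q y * (P x y / margY P y)
            = (chanOut P Q y / margY P y) * P x y := by ring
        simp only [hRdef, hTdef]
        rw [e1, e2, mul_div_mul_right _ _ hPxy.ne']
      rw [hrt, Real.logb_div (div_pos hQx (hX x)).ne' (div_pos hQY (hY y)).ne', mul_sub]
  have hdecomp : klDiv R T = klDiv Q (margX P) - klDiv (chanOut P Q) (margY P) := by
    rw [show klDiv R T = ∑ x, ∑ y, R (x, y) * Real.logb 2 (R (x, y) / T (x, y)) by
      rw [klDiv, Fintype.sum_prod_type]]
    rw [Finset.sum_congr rfl fun x _ => Finset.sum_congr rfl fun y _ => hpt x y]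
    simp only [Finset.sum_sub_distrib]
    congr 1
    · apply Finset.sum_congr rfl; intro x _
      rw [← Finset.sum_mul, hRrow]
    · rw [Finset.sum_comm]
      apply Finset.sum_congr rfl; intro y _
      rw [← Finset.sum_mul, hRcol]
  linarith

lemma chanOut_margX (P : 𝓧 → 𝓨 → ℝ) (hX : ∀ x, 0 < margX P x) :
    chanOut P (margX P) = margY P := by
  funext y
  apply Finset.sum_congr rfl; intro x _
  rw [mul_comm, div_mul_cancel₀ _ (hX x).ne']

lemma sdpi_single (P : 𝓧 → 𝓨 → ℝ) (hP : IsPMF fun p : 𝓧 × 𝓨 => P p.1 p.2)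
    (hX : ∀ x, 0 < margX P x) (hY : ∀ y, 0 < margY P y)
    (Q : 𝓧 → ℝ) (hQ : IsPMF Q) :
    klDiv (chanOut P Q) (margY P) ≤ sStar P * klDiv Q (margX P) := by
  have hPn : ∀ x y, 0 ≤ P x y := fun x y => hP.1 (x, y)
  by_cases hQP : Q = margX P
  · rw [hQP, chanOut_margX P hX, klDiv_self_eq_zero _ hY,
      klDiv_self_eq_zero _ hX, mul_zero]
  · have hDx : 0 < klDiv Q (margX P) :=
      gibbs_strict Q (margX P) hQ hX (sum_margX P hP) hQP
    have hbdd : BddAbove {r : ℝ | ∃ Q' : 𝓧 → ℝ, IsPMF Q' ∧ Q' ≠ margX P ∧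
        r = klDiv (chanOut P Q') (margY P) / klDiv Q' (margX P)} := by
      refine ⟨1, ?_⟩
      rintro r ⟨Q', hQ', hne', rfl⟩
      have hDx' : 0 < klDiv Q' (margX P) :=
        gibbs_strict Q' (margX P) hQ' hX (sum_margX P hP) hne'
      exact (div_le_one hDx').mpr (kl_dpi P hPn hX hY Q' hQ')
    have hmem : klDiv (chanOut P Q) (margY P) / klDiv Q (margX P) ∈
        {r : ℝ | ∃ Q' : 𝓧 → ℝ, IsPMF Q' ∧ Q' ≠ margX P ∧
          r = klDiv (chanOut P Q') (margY P) / klDiv Q' (margX P)} :=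
      ⟨Q, hQ, hQP, rfl⟩
    have hle : klDiv (chanOut P Q) (margY P) / klDiv Q (margX P) ≤ sStar P :=
      le_csSup hbdd hmem
    calc klDiv (chanOut P Q) (margY P)
        = klDiv (chanOut P Q) (margY P) / klDiv Q (margX P) * klDiv Q (margX P) :=
          (div_mul_cancel₀ _ hDx.ne').symm
      _ ≤ sStar P * klDiv Q (margX P) := mul_le_mul_of_nonneg_right hle hDx.le

/-- strong data processing inequality.  If `U ↔ X ↔ Y` is a Markov
chain (joint pmf `J` on `𝓤 × 𝓧 × 𝓨` with `(X,Y)`-marginal `P` and `U, Y`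
conditionally independent given `X`), then `I(Y;U) ≤ s*(X;Y) ⬝ I(X;U)`. -/
theorem strong_data_processing {𝓤 : Type*} [Fintype 𝓤]
    (P : 𝓧 → 𝓨 → ℝ) (hP : IsPMF (fun p : 𝓧 × 𝓨 => P p.1 p.2))
    (hX : ∀ x, 0 < margX P x) (hY : ∀ y, 0 < margY P y)
    (J : 𝓤 → 𝓧 → 𝓨 → ℝ) (hJ : IsPMF (fun p : 𝓤 × 𝓧 × 𝓨 => J p.1 p.2.1 p.2.2))
    (hMarg : ∀ x y, ∑ u, J u x y = P x y)
    (hMarkov : ∀ u x y, J u x y * margX P x = (∑ y', J u x y') * P x y) :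
    mutualInfo (fun (y : 𝓨) (u : 𝓤) => ∑ x, J u x y)
      ≤ sStar P * mutualInfo (fun (x : 𝓧) (u : 𝓤) => ∑ y, J u x y) := by
  classical
  have hJ0 : ∀ u x y, 0 ≤ J u x y := fun u x y => hJ.1 (u, (x, y))
  set w : 𝓤 → ℝ := fun u => ∑ x, ∑ y, J u x y with hwdef
  have hw0 : ∀ u, 0 ≤ w u := fun u =>
    Finset.sum_nonneg fun x _ => Finset.sum_nonneg fun y _ => hJ0 u x y
  have hJzero : ∀ u, w u = 0 → ∀ x y, J u x y = 0 := by
    intro u hu x y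
    have h1 := (Finset.sum_eq_zero_iff_of_nonneg
      (fun x _ => Finset.sum_nonneg fun y _ => hJ0 u x y)).mp hu x (Finset.mem_univ x)
    exact (Finset.sum_eq_zero_iff_of_nonneg
      (fun y _ => hJ0 u x y)).mp h1 y (Finset.mem_univ y)
  set Qx : 𝓤 → 𝓧 → ℝ := fun u x => (∑ y, J u x y) / w u with hQxdef
  set Qy : 𝓤 → 𝓨 → ℝ := fun u y => (∑ x, J u x y) / w u with hQydef
  have hmY1 : ∀ y, margX (fun (y : 𝓨) (u : 𝓤) => ∑ x, J u x y) y = margY P y := by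
    intro y
    rw [show margX (fun (y : 𝓨) (u : 𝓤) => ∑ x, J u x y) y
        = ∑ u, ∑ x, J u x y from rfl, Finset.sum_comm]
    exact Finset.sum_congr rfl fun x _ => hMarg x y
  have hmY2 : ∀ u, margY (fun (y : 𝓨) (u : 𝓤) => ∑ x, J u x y) u = w u := by
    intro u
    rw [show margY (fun (y : 𝓨) (u : 𝓤) => ∑ x, J u x y) u
        = ∑ y, ∑ x, J u x y from rfl, Finset.sum_comm]
  have hmX1 : ∀ x, margX (fun (x : 𝓧) (u : 𝓤) => ∑ y, J u x y) x = margX P x := by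
    intro x
    rw [show margX (fun (x : 𝓧) (u : 𝓤) => ∑ y, J u x y) x
        = ∑ u, ∑ y, J u x y from rfl, Finset.sum_comm]
    exact Finset.sum_congr rfl fun y _ => hMarg x y
  have hmX2 : ∀ u, margY (fun (x : 𝓧) (u : 𝓤) => ∑ y, J u x y) u = w u :=
    fun u => rfl
  have hIY : mutualInfo (fun (y : 𝓨) (u : 𝓤) => ∑ x, J u x y)
      = ∑ u, w u * klDiv (Qy u) (margY P) := by
    unfold mutualInfo klDiv
    rw [Finset.sum_comm]
    apply Finset.sum_congr rfl; intro u _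
    rw [Finset.mul_sum]
    apply Finset.sum_congr rfl; intro y _
    beta_reduce
    rw [hmY1 y, hmY2 u]
    rcases eq_or_lt_of_le (hw0 u) with h | h
    · have hz : (∑ x, J u x y) = 0 :=
        Finset.sum_eq_zero fun x _ => hJzero u h.symm x y
      rw [hz, ← h, zero_mul, zero_mul]
    · have hne := h.ne'
      simp only [hQydef]
      have e1 : (∑ x, J u x y) / w u / margY P y
          = (∑ x, J u x y) / (margY P y * w u) := by rw [div_div, mul_comm]
      rw [e1, ← mul_assoc, mul_comm (w u) ((∑ x, J u x y) / w u),
        div_mul_cancel₀ _ hne]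
  have hIX : mutualInfo (fun (x : 𝓧) (u : 𝓤) => ∑ y, J u x y)
      = ∑ u, w u * klDiv (Qx u) (margX P) := by
    unfold mutualInfo klDiv
    rw [Finset.sum_comm]
    apply Finset.sum_congr rfl; intro u _
    rw [Finset.mul_sum]
    apply Finset.sum_congr rfl; intro x _
    beta_reduce
    rw [hmX1 x, hmX2 u]
    rcases eq_or_lt_of_le (hw0 u) with h | h
    · have hz : (∑ y, J u x y) = 0 :=
        Finset.sum_eq_zero fun y _ => hJzero u h.symm x y
      rw [hz, ← h, zero_mul, zero_mul]
    · have hne := h.ne'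
      simp only [hQxdef]
      have e1 : (∑ y, J u x y) / w u / margX P x
          = (∑ y, J u x y) / (margX P x * w u) := by rw [div_div, mul_comm]
      rw [e1, ← mul_assoc, mul_comm (w u) ((∑ y, J u x y) / w u),
        div_mul_cancel₀ _ hne]
  rw [hIY, hIX, Finset.mul_sum]
  apply Finset.sum_le_sum
  intro u _
  rcases eq_or_lt_of_le (hw0 u) with h | h
  · rw [← h, zero_mul, zero_mul, mul_zero]
  · have hne := h.ne'
    have hQxpmf : IsPMF (Qx u) := by
      constructor
      · intro x
        exact div_nonneg (Finset.sum_nonneg fun y _ => hJ0 u x y) (hw0 u)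
      · simp only [hQxdef]
        rw [← Finset.sum_div]
        exact div_self hne
    have hchan : chanOut P (Qx u) = Qy u := by
      funext y
      simp only [chanOut, hQxdef, hQydef]
      rw [Finset.sum_div]
      apply Finset.sum_congr rfl; intro x _
      rw [div_mul_div_comm, ← hMarkov u x y, mul_div_mul_right _ _ (hX x).ne']
    have hsd := sdpi_single P hP hX hY (Qx u) hQxpmf
    rw [hchan] at hsd
    calc w u * klDiv (Qy u) (margY P)
        ≤ w u * (sStar P * klDiv (Qx u) (margX P)) :=
          mul_le_mul_of_nonneg_left hsd (hw0 u)
      _ = sStar P * (w u * klDiv (Qx u) (margX P)) := by ring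

end
end

section
/- Fix real numbers 0 < D_X, 0 < D_Y, and 0 ≤ ρ ≤ 1. Suppose R_X ≥ 0 and R_Y ≥ 0 satisfy R_X ≥ (1/2) log₂( (1/D_X)(1 − ρ² + ρ² 2^{−2R_Y}) ) and R_Y ≥ (1/2) log₂( (1/D_Y)(1 − ρ² + ρ² 2^{−2R_X}) ). Then R_X + R_Y ≥ (1/(1+ρ²)) · ( (1/2) log₂(1/D_X) + (1/2) log₂(1/D_Y) ). -/
/-- Linearization: from Oohama's bound we get `R + ρ²·S ≥ (1/2)·log₂(1/D)`. -/
lemma oohama_linearize (D ρ R S : ℝ) (hD : 0 < D) (hρ0 : 0 ≤ ρ) (hρ1 : ρ ≤ 1)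
    (hS : 0 ≤ S)
    (hR : R ≥ (1 / 2) * Real.logb 2 ((1 / D) * (1 - ρ ^ 2 + ρ ^ 2 * (2 : ℝ) ^ (-2 * S)))) :
    R + ρ ^ 2 * S ≥ (1 / 2) * Real.logb 2 (1 / D) := by
  set t : ℝ := (2 : ℝ) ^ (-2 * S) with ht
  have htpos : 0 < t := Real.rpow_pos_of_pos (by norm_num) _
  have ht1 : t ≤ 1 := by
    apply Real.rpow_le_one_of_one_le_of_nonpos (by norm_num)
    linarith
  have hρ2 : ρ ^ 2 ≤ 1 := by nlinarith
  have hupos : 0 < 1 - ρ ^ 2 + ρ ^ 2 * t := by nlinarith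
  -- weighted AM-GM: t ^ ρ² ≤ (1-ρ²) + ρ² t
  have hamgm : (1 : ℝ) ^ (1 - ρ ^ 2) * t ^ (ρ ^ 2) ≤ (1 - ρ ^ 2) * 1 + ρ ^ 2 * t :=
    Real.geom_mean_le_arith_mean2_weighted (by nlinarith) (by positivity) (by norm_num)
      htpos.le (by ring)
  have hamgm' : t ^ (ρ ^ 2) ≤ 1 - ρ ^ 2 + ρ ^ 2 * t := by
    simpa [Real.one_rpow] using hamgm
  have hlog : ρ ^ 2 * Real.log t ≤ Real.log (1 - ρ ^ 2 + ρ ^ 2 * t) := by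
    calc ρ ^ 2 * Real.log t = Real.log (t ^ (ρ ^ 2)) := (Real.log_rpow htpos _).symm
      _ ≤ Real.log (1 - ρ ^ 2 + ρ ^ 2 * t) :=
        Real.log_le_log (Real.rpow_pos_of_pos htpos _) hamgm'
  have hlogb : ρ ^ 2 * Real.logb 2 t ≤ Real.logb 2 (1 - ρ ^ 2 + ρ ^ 2 * t) := by
    unfold Real.logb
    rw [← mul_div_assoc]
    exact div_le_div_of_nonneg_right hlog (by positivity)
  have hlogt : Real.logb 2 t = -2 * S := by
    rw [ht, Real.logb, Real.log_rpow (by norm_num)]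
    field_simp
  have hsplit : Real.logb 2 ((1 / D) * (1 - ρ ^ 2 + ρ ^ 2 * t))
      = Real.logb 2 (1 / D) + Real.logb 2 (1 - ρ ^ 2 + ρ ^ 2 * t) :=
    Real.logb_mul (by positivity) (ne_of_gt hupos)
  rw [hsplit] at hR
  rw [hlogt] at hlogb
  linarith

/-- For `0 < D_X`, `0 < D_Y`, `0 ≤ ρ ≤ 1`, any `R_X, R_Y ≥ 0`
satisfying Oohama's two rate bounds satisfies the sum-rate lower bound
`R_X + R_Y ≥ (1/(1+ρ²))·((1/2)log₂(1/D_X) + (1/2)log₂(1/D_Y))`. -/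
theorem gaussian_sum_rate_bound (Dx Dy ρ Rx Ry : ℝ)
    (hDx : 0 < Dx) (hDy : 0 < Dy) (hρ0 : 0 ≤ ρ) (hρ1 : ρ ≤ 1)
    (hRx0 : 0 ≤ Rx) (hRy0 : 0 ≤ Ry)
    (hRx : Rx ≥ (1 / 2) * Real.logb 2 ((1 / Dx) * (1 - ρ ^ 2 + ρ ^ 2 * (2 : ℝ) ^ (-2 * Ry))))
    (hRy : Ry ≥ (1 / 2) * Real.logb 2 ((1 / Dy) * (1 - ρ ^ 2 + ρ ^ 2 * (2 : ℝ) ^ (-2 * Rx)))) :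
    Rx + Ry ≥ (1 / (1 + ρ ^ 2)) *
      ((1 / 2) * Real.logb 2 (1 / Dx) + (1 / 2) * Real.logb 2 (1 / Dy)) := by
  have h1 := oohama_linearize Dx ρ Rx Ry hDx hρ0 hρ1 hRy0 hRx
  have h2 := oohama_linearize Dy ρ Ry Rx hDy hρ0 hρ1 hRx0 hRy
  have hpos : 0 < 1 + ρ ^ 2 := by positivity
  rw [ge_iff_le, div_mul_eq_mul_div, div_le_iff₀ hpos]
  nlinarith
end
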